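/- Let n ≥ 1, let M : Matrix (Fin n) (Fin n) ℝ be a symmetric matrix all of whose eigenvalues lie in [μ̲, μ̄], and let g̲, ḡ, g : Fin n → ℝ satisfy g̲ i ≤ g i ≤ ḡ i for all i. Then every eigenvalue λ of the symmetric matrix g gᵀ + M satisfies μ̲ ≤ λ ≤ ∑_i max((g̲ i)², (ḡ i)²) + μ̄. -/

import Mathlib

open Matrix

lemma quad_form_bounds (n : ℕ) (M : Matrix (Fin n) (Fin n) ℝ) (hM : M.IsSymm)
    (μl μu : ℝ)
    (hMev : ∀ μ : ℝ, ∀ w : Fin n → ℝ, w ≠ 0 → M.mulVec w = μ • w → μl ≤ μ ∧ μ ≤ μu)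
    (w : Fin n → ℝ) :
    μl * (w ⬝ᵥ w) ≤ w ⬝ᵥ M *ᵥ w ∧ w ⬝ᵥ M *ᵥ w ≤ μu * (w ⬝ᵥ w) := by
  classical
  have hH : M.IsHermitian := by
    rwa [Matrix.IsHermitian, conjTranspose_eq_transpose_of_trivial]
  have hevb : ∀ i, μl ≤ hH.eigenvalues i ∧ hH.eigenvalues i ≤ μu := by
    intro i
    exact hMev _ _ ((WithLp.ofLp_eq_zero 2).ne.2 <| hH.eigenvectorBasis.orthonormal.ne_zero i) (hH.mulVec_eigenvectorBasis i)
  set U : Matrix (Fin n) (Fin n) ℝ := (hH.eigenvectorUnitary : Matrix (Fin n) (Fin n) ℝ) with hU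
  have hUU : U * star U = 1 := (Matrix.mem_unitaryGroup_iff.mp hH.eigenvectorUnitary.2)
  have hsU : star U = Uᵀ := by
    rw [Matrix.star_eq_conjTranspose, conjTranspose_eq_transpose_of_trivial]
  set c : Fin n → ℝ := star U *ᵥ w with hc
  have hquad : w ⬝ᵥ M *ᵥ w = ∑ i, hH.eigenvalues i * c i ^ 2 := by
    conv_lhs => rw [hH.spectral_theorem, Unitary.conjStarAlgAut_apply]
    rw [← mulVec_mulVec, ← mulVec_mulVec, dotProduct_mulVec w U]
    have hwU : w ᵥ* U = c := by rw [hc, hsU, ← mulVec_transpose]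
    rw [hwU, ← hU, ← hc]
    simp only [dotProduct, Matrix.mulVec_diagonal, Function.comp_apply, RCLike.ofReal_real_eq_id,
      id_eq]
    exact Finset.sum_congr rfl fun i _ => by ring
  have hnorm : w ⬝ᵥ w = ∑ i, c i ^ 2 := by
    have : w ⬝ᵥ w = c ⬝ᵥ c := by
      rw [hc, dotProduct_mulVec, hsU, vecMul_transpose, mulVec_mulVec, ← hsU, hUU, one_mulVec]
    rw [this]
    exact Finset.sum_congr rfl fun i _ => (sq (c i)).symm
  constructor
  · rw [hquad, hnorm, Finset.mul_sum]
    exact Finset.sum_le_sum fun i _ => mul_le_mul_of_nonneg_right (hevb i).1 (sq_nonneg _)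
  · rw [hquad, hnorm, Finset.mul_sum]
    exact Finset.sum_le_sum fun i _ => mul_le_mul_of_nonneg_right (hevb i).2 (sq_nonneg _)

/-- Spectral bound for `g gᵀ + M` given entrywise bounds on `g` and
eigenvalue bounds on the symmetric matrix `M`. -/
theorem outer_self_add_matrix_eigenvalue_bounds
    (n : ℕ) (hn : 0 < n)
    (M : Matrix (Fin n) (Fin n) ℝ) (hM : M.IsSymm)
    (μl μu : ℝ)
    (hMev : ∀ μ : ℝ, ∀ w : Fin n → ℝ, w ≠ 0 → M.mulVec w = μ • w → μl ≤ μ ∧ μ ≤ μu)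
    (gl gu g : Fin n → ℝ) (hg : ∀ i, gl i ≤ g i ∧ g i ≤ gu i)
    (lam : ℝ) (v : Fin n → ℝ) (hv : v ≠ 0)
    (hev : ((Matrix.of fun i j => g i * g j) + M).mulVec v = lam • v) :
    μl ≤ lam ∧ lam ≤ (∑ i, max ((gl i) ^ 2) ((gu i) ^ 2)) + μu := by
  have hq := quad_form_bounds n M hM μl μu hMev v
  have hvv : 0 < v ⬝ᵥ v := by
    refine lt_of_le_of_ne (Finset.sum_nonneg fun i _ => mul_self_nonneg _) ?_
    exact fun h => hv (dotProduct_self_eq_zero.mp h.symm)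
  have hG : v ⬝ᵥ ((Matrix.of fun i j => g i * g j) *ᵥ v) = (g ⬝ᵥ v) ^ 2 := by
    simp only [Matrix.mulVec, dotProduct, Matrix.of_apply]
    rw [sq, Finset.sum_mul_sum]
    exact Finset.sum_congr rfl fun i _ => by
      rw [Finset.mul_sum]
      exact Finset.sum_congr rfl fun j _ => by ring
  have hlam : lam * (v ⬝ᵥ v) = (g ⬝ᵥ v) ^ 2 + v ⬝ᵥ M *ᵥ v := by
    have h := congrArg (fun x => v ⬝ᵥ x) hev
    simpa [Matrix.add_mulVec, dotProduct_add, dotProduct_smul, hG, smul_eq_mul,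
      mul_comm] using h.symm
  have hvv2 : v ⬝ᵥ v = ∑ i, v i ^ 2 :=
    Finset.sum_congr rfl fun i _ => (sq (v i)).symm
  have hcs : (g ⬝ᵥ v) ^ 2 ≤ (∑ i, max ((gl i) ^ 2) ((gu i) ^ 2)) * (v ⬝ᵥ v) := by
    have h1 : (g ⬝ᵥ v) ^ 2 ≤ (∑ i, g i ^ 2) * (∑ i, v i ^ 2) :=
      Finset.sum_mul_sq_le_sq_mul_sq _ g v
    have h2 : (∑ i, g i ^ 2) ≤ ∑ i, max ((gl i) ^ 2) ((gu i) ^ 2) := by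
      refine Finset.sum_le_sum fun i _ => ?_
      rcases le_total 0 (g i) with h | h
      · exact le_max_of_le_right (by nlinarith [(hg i).2])
      · exact le_max_of_le_left (by nlinarith [(hg i).1])
    rw [hvv2]
    calc (g ⬝ᵥ v) ^ 2 ≤ (∑ i, g i ^ 2) * (∑ i, v i ^ 2) := h1
      _ ≤ _ := by
        refine mul_le_mul_of_nonneg_right h2 ?_
        exact Finset.sum_nonneg fun i _ => sq_nonneg _
  constructor
  · refine le_of_mul_le_mul_right ?_ hvv
    nlinarith [hq.1, sq_nonneg (g ⬝ᵥ v)]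
  · refine le_of_mul_le_mul_right ?_ hvv
    nlinarith [hq.2]
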